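/- arXiv:0812.3044 — 3 statements merged into one kernel-verified Lean document; each statement's English description precedes it below -/
import Mathlib

section
/- Let n ≥ 1 and let D be the dihedral group of order 4n with presentation ⟨a, b | a^{2n} = 1, b² = 1, bab = a^{-1}⟩. In the complex group algebra ℂ[D], define f_k = a^k − (1/2)(a^k − a^{-k})(1 + a^n) for each integer k. Then f_k · f_1 = f_{k+1} for all k ∈ ℤ; in particular f_1^{2n} = 1 and f_{-1} is the inverse of f_1. -/
open MonoidAlgebra DihedralGroup

lemma aux_hF {R : Type*} [CommRing R] (C a a' s : R) (h2 : C + C = 1) :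
    a - C * ((a - a') * (1 + s)) = C * (a * (1 - s)) + C * (a' * (1 + s)) := by
  linear_combination (-a) * h2

lemma aux_key {R : Type*} [CommRing R] (C a a' b b' c c' s : R)
    (h2 : C + C = 1) (hab : a * b = c) (hab' : a' * b' = c') (hs : s * s = 1) :
    (a - C * ((a - a') * (1 + s))) * (b - C * ((b - b') * (1 + s)))
      = c - C * ((c - c') * (1 + s)) := by
  rw [aux_hF C a a' s h2, aux_hF C b b' s h2, aux_hF C c c' s h2]
  linear_combination (C^2*(1-s)^2) * hab + (C^2*(1+s)^2) * hab'
    + (C^2*(c + c' - a*b' - a'*b)) * hs + (C*(c*(1-s) + c'*(1+s))) * h2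

/-- the monoid hom from `Multiplicative (ZMod n)` to the dihedral group. -/
def rHom (n : ℕ) : Multiplicative (ZMod n) →* DihedralGroup n where
  toFun g := r g.toAdd
  map_one' := rfl
  map_mul' _ _ := rfl

lemma r_one_zpow (n : ℕ) (k : ℤ) :
    (r 1 : DihedralGroup n) ^ k = r (k : ZMod n) := by
  induction k using Int.induction_on with
  | zero => simpa using DihedralGroup.one_def
  | succ m ih =>
      rw [zpow_add_one, ih, r_mul_r]
      exact congrArg r (by push_cast; ring)
  | pred m ih =>
      rw [zpow_sub_one, ih]
      have h1 : (r 1 : DihedralGroup n)⁻¹ = r (-1) := by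
        rw [inv_eq_iff_mul_eq_one, r_mul_r, add_neg_cancel]
        exact DihedralGroup.one_def.symm
      rw [h1, r_mul_r]
      exact congrArg r (by push_cast; ring)

theorem stmt0 (n : ℕ) (hn : 1 ≤ n)
    (f : ℤ → MonoidAlgebra ℂ (DihedralGroup (2 * n)))
    (hf : ∀ k : ℤ, f k =
      of ℂ (DihedralGroup (2 * n)) ((r 1 : DihedralGroup (2 * n)) ^ k)
        - (1 / 2 : ℂ) •
          ((of ℂ (DihedralGroup (2 * n)) ((r 1 : DihedralGroup (2 * n)) ^ k)
              - of ℂ (DihedralGroup (2 * n)) ((r 1 : DihedralGroup (2 * n)) ^ (-k)))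
            * (1 + of ℂ (DihedralGroup (2 * n)) ((r 1 : DihedralGroup (2 * n)) ^ (n : ℤ))))) :
    (∀ k : ℤ, f k * f 1 = f (k + 1)) ∧ f 1 ^ (2 * n) = 1 ∧
      f (-1) * f 1 = 1 ∧ f 1 * f (-1) = 1 := by
  set G := Multiplicative (ZMod (2 * n)) with hG
  set Φ : MonoidAlgebra ℂ G →ₐ[ℂ] MonoidAlgebra ℂ (DihedralGroup (2 * n)) :=
    mapDomainAlgHom ℂ ℂ (rHom (2 * n)) with hΦdef
  set Y : ℤ → MonoidAlgebra ℂ G :=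
    fun k => of ℂ G (Multiplicative.ofAdd ((k : ZMod (2 * n)))) with hY
  set C : MonoidAlgebra ℂ G := algebraMap ℂ _ (1 / 2) with hC
  set F : ℤ → MonoidAlgebra ℂ G :=
    fun k => Y k - C * ((Y k - Y (-k)) * (1 + Y (n : ℤ))) with hFdef
  have hΦof : ∀ g : G, Φ (of ℂ G g) = of ℂ (DihedralGroup (2 * n)) (rHom (2 * n) g) := by
    intro g
    simp [hΦdef, mapDomainAlgHom, mapDomainRingHom, of_apply, Finsupp.mapDomain_single]
  have hΦY : ∀ k : ℤ, Φ (Y k) =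
      of ℂ (DihedralGroup (2 * n)) ((r 1 : DihedralGroup (2 * n)) ^ k) := by
    intro k
    rw [hY, hΦof, _root_.r_one_zpow]
    rfl
  have hΦF : ∀ k : ℤ, f k = Φ (F k) := by
    intro k
    rw [hf k, hFdef]
    simp only [map_sub, map_mul, map_add, map_one, hΦY, hC, AlgHom.commutes,
      Algebra.smul_def]
  have h2 : C + C = 1 := by
    rw [hC, ← map_add]
    have h12 : (1 / 2 : ℂ) + 1 / 2 = 1 := by norm_num
    rw [h12, map_one]
  have hYmul : ∀ a b : ℤ, Y a * Y b = Y (a + b) := by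
    intro a b
    rw [hY]
    simp only
    rw [← map_mul, ← ofAdd_add]
    push_cast
    rfl
  have hs : Y (n : ℤ) * Y (n : ℤ) = 1 := by
    rw [hYmul, hY]
    simp only
    have hcast : (((n : ℤ) + n : ℤ) : ZMod (2 * n)) = 0 := by
      push_cast
      rw [← Nat.cast_add, ← two_mul, ZMod.natCast_self]
    rw [hcast]
    simp [MonoidAlgebra.one_def]
  have hkey : ∀ k j : ℤ, f k * f j = f (k + j) := by
    intro k j
    rw [hΦF, hΦF, hΦF, ← map_mul]
    congr 1
    rw [hFdef]
    simp only
    exact aux_key C (Y k) (Y (-k)) (Y j) (Y (-j)) (Y (k + j)) (Y (-(k + j))) (Y (n : ℤ))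
      h2 (hYmul k j) (by rw [hYmul]; ring_nf) hs
  have hf0 : f 0 = 1 := by
    rw [hf 0]
    simp [MonoidAlgebra.one_def]
  have hpow : ∀ m : ℕ, f 1 ^ m = f m := by
    intro m
    induction m with
    | zero => simpa using hf0.symm
    | succ m ih => rw [pow_succ, ih, hkey]; norm_num
  refine ⟨fun k => hkey k 1, ?_, ?_, ?_⟩
  · rw [hpow (2 * n)]
    have hr : (r 1 : DihedralGroup (2 * n)) ^ ((2 * n : ℕ) : ℤ) = 1 := by
      rw [_root_.r_one_zpow, Int.cast_natCast, ZMod.natCast_self]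
      exact DihedralGroup.one_def.symm
    have hrneg : (r 1 : DihedralGroup (2 * n)) ^ (-((2 * n : ℕ) : ℤ)) = 1 := by
      rw [zpow_neg, hr, inv_one]
    rw [hf, hr, hrneg]
    simp [MonoidAlgebra.one_def]
  · rw [hkey]; norm_num [hf0]
  · rw [hkey]; norm_num [hf0]
end

section
/- Let n ≥ 1 and let D be the dihedral group of order 4n with generators a (order 2n) and b (order 2, bab⁻¹ = a⁻¹). The elements A = a − (1/2)(a − a^{-1})(1 + a^n) and B = a^n b of the group algebra ℂ[D] satisfy A^{2n} = 1, B² = 1, and BA = A^{-1}B; consequently the assignment a ↦ A, b ↦ B extends to a unital algebra endomorphism Θ′ of ℂ[D]. Moreover Θ′ is an involution: Θ′(Θ′(a)) = a and Θ′(Θ′(b)) = b, so Θ′ is an algebra automorphism of ℂ[D]. -/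
open MonoidAlgebra DihedralGroup

lemma dihedral_aux {S : Type*} [Ring S] [Algebra ℂ S]
    (n : ℕ) (hn : 1 ≤ n) (g gi s : S)
    (hgi : g * gi = 1) (hig : gi * g = 1)
    (hg2n : g ^ (2 * n) = 1)
    (hss : s * s = 1) (hsg : s * g = gi * s)
    (A B : S)
    (hA : A = g - (1 / 2 : ℂ) • ((g - gi) * (1 + g ^ n)))
    (hB : B = g ^ n * s) :
    A ^ (2 * n) = 1 ∧ B * B = 1 ∧ A * B * A = B ∧ A * B = B * A ^ (2 * n - 1) ∧
      A ^ n = g ^ n ∧ B * A ^ n = s ∧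
      A - (1 / 2 : ℂ) • ((A - A ^ (2 * n - 1)) * (1 + A ^ n)) = g := by
  have swap : ∀ x y z : S, x * y = y * x → x * (y * z) = y * (x * z) := by
    intro x y z h; rw [← mul_assoc, h, mul_assoc]
  have hgnn : g ^ n * g ^ n = 1 := by
    rw [← pow_add]; rw [show n + n = 2 * n by omega]; exact hg2n
  have hpowinv : ∀ k : ℕ, gi ^ k * g ^ k = 1 := by
    intro k; induction k with
    | zero => simp
    | succ k ih =>
      rw [pow_succ gi, pow_succ' g, mul_assoc, ← mul_assoc gi, hig, one_mul, ih]
  have hginn : gi ^ n = g ^ n := by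
    calc gi ^ n = gi ^ n * (g ^ n * g ^ n) := by rw [hgnn, mul_one]
      _ = (gi ^ n * g ^ n) * g ^ n := by rw [mul_assoc]
      _ = g ^ n := by rw [hpowinv, one_mul]
  have hgi2n : gi ^ (2 * n) = 1 := by
    calc gi ^ (2 * n) = gi ^ (2 * n) * g ^ (2 * n) := by rw [hg2n, mul_one]
      _ = 1 := hpowinv _
  have hg2n1 : g ^ (2 * n - 1) = gi := by
    calc g ^ (2 * n - 1) = g ^ (2 * n - 1) * (g * gi) := by rw [hgi, mul_one]
      _ = (g ^ (2 * n - 1) * g) * gi := by rw [mul_assoc]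
      _ = g ^ (2 * n) * gi := by rw [← pow_succ, show 2 * n - 1 + 1 = 2 * n by omega]
      _ = gi := by rw [hg2n, one_mul]
  have hgi2n1 : gi ^ (2 * n - 1) = g := by
    calc gi ^ (2 * n - 1) = gi ^ (2 * n - 1) * (gi * g) := by rw [hig, mul_one]
      _ = gi ^ (2 * n) * g := by
          rw [← mul_assoc, ← pow_succ, show 2 * n - 1 + 1 = 2 * n by omega]
      _ = g := by rw [hgi2n, one_mul]
  have cgng : g ^ n * g = g * g ^ n := ((Commute.refl g).pow_left n).eq
  have cgngi : g ^ n * gi = gi * g ^ n := by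
    rw [← hginn]; exact ((Commute.refl gi).pow_left n).eq
  set e : S := (1 / 2 : ℂ) • (1 + g ^ n) with he
  set f : S := (1 / 2 : ℂ) • (1 - g ^ n) with hf
  have key : ∀ a b : S, ((1/2:ℂ) • a) * ((1/2:ℂ) • b) = (1/(4:ℂ)) • (a * b) := by
    intro a b; rw [smul_mul_assoc, mul_smul_comm, smul_smul]; norm_num
  have hef1 : e + f = 1 := by
    rw [he, hf, ← smul_add, show (1 + g ^ n) + (1 - g ^ n) = (2:ℂ) • (1:S) by
      rw [two_smul]; abel, smul_smul]
    norm_num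
  have hee : e * e = e := by
    rw [he, key]
    have h1 : (1 + g ^ n) * (1 + g ^ n) = (2:ℂ) • (1 + g ^ n) := by
      have : (1 + g ^ n) * (1 + g ^ n) = 1 + g ^ n + g ^ n + g ^ n * g ^ n := by noncomm_ring
      rw [this, hgnn, two_smul]; abel
    rw [h1, smul_smul]; norm_num
  have hff : f * f = f := by
    rw [hf, key]
    have h1 : (1 - g ^ n) * (1 - g ^ n) = (2:ℂ) • (1 - g ^ n) := by
      have : (1 - g ^ n) * (1 - g ^ n) = 1 - g ^ n - g ^ n + g ^ n * g ^ n := by noncomm_ring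
      rw [this, hgnn, two_smul]; abel
    rw [h1, smul_smul]; norm_num
  have hef0 : e * f = 0 := by
    rw [he, hf, key]
    have h1 : (1 + g ^ n) * (1 - g ^ n) = 0 := by
      have : (1 + g ^ n) * (1 - g ^ n) = 1 - g ^ n * g ^ n := by noncomm_ring
      rw [this, hgnn, sub_self]
    rw [h1, smul_zero]
  have hfe0 : f * e = 0 := by
    rw [he, hf, key]
    have h1 : (1 - g ^ n) * (1 + g ^ n) = 0 := by
      have : (1 - g ^ n) * (1 + g ^ n) = 1 - g ^ n * g ^ n := by noncomm_ring
      rw [this, hgnn, sub_self]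
    rw [h1, smul_zero]
  have ceg : e * g = g * e := by
    rw [he, smul_mul_assoc, mul_smul_comm]; congr 1
    rw [add_mul, mul_add, one_mul, mul_one, cgng]
  have cegi : e * gi = gi * e := by
    rw [he, smul_mul_assoc, mul_smul_comm]; congr 1
    rw [add_mul, mul_add, one_mul, mul_one, cgngi]
  have cfg : f * g = g * f := by
    rw [hf, smul_mul_assoc, mul_smul_comm]; congr 1
    rw [sub_mul, mul_sub, one_mul, mul_one, cgng]
  have cfgi : f * gi = gi * f := by
    rw [hf, smul_mul_assoc, mul_smul_comm]; congr 1
    rw [sub_mul, mul_sub, one_mul, mul_one, cgngi]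
  have cegk : ∀ k : ℕ, e * g ^ k = g ^ k * e := fun k =>
    (Commute.pow_right (ceg : Commute e g) k).eq
  have cegik : ∀ k : ℕ, e * gi ^ k = gi ^ k * e := fun k =>
    (Commute.pow_right (cegi : Commute e gi) k).eq
  have cfgk : ∀ k : ℕ, f * g ^ k = g ^ k * f := fun k =>
    (Commute.pow_right (cfg : Commute f g) k).eq
  have cfgik : ∀ k : ℕ, f * gi ^ k = gi ^ k * f := fun k =>
    (Commute.pow_right (cfgi : Commute f gi) k).eq
  have hA' : A = gi * e + g * f := by
    have h1 : (1/2:ℂ) • ((g - gi) * (1 + g ^ n)) = (g - gi) * e := by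
      rw [he, mul_smul_comm]
    have h2 : g = g * (e + f) := by rw [hef1, mul_one]
    calc A = g - (g - gi) * e := by rw [hA, h1]
      _ = g * (e + f) - (g - gi) * e := by rw [← h2]
      _ = gi * e + g * f := by noncomm_ring
  have hApow : ∀ k : ℕ, A ^ k = gi ^ k * e + g ^ k * f := by
    intro k; induction k with
    | zero => simp [hef1]
    | succ k ih =>
      rw [pow_succ' A, ih, hA', add_mul, mul_add, mul_add]
      have t1 : gi * e * (gi ^ k * e) = gi ^ (k+1) * e := by
        rw [mul_assoc, swap e (gi ^ k) e (cegik k), hee, ← mul_assoc, ← pow_succ']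
      have t2 : gi * e * (g ^ k * f) = 0 := by
        rw [mul_assoc, swap e (g ^ k) f (cegk k), hef0, mul_zero, mul_zero]
      have t3 : g * f * (gi ^ k * e) = 0 := by
        rw [mul_assoc, swap f (gi ^ k) e (cfgik k), hfe0, mul_zero, mul_zero]
      have t4 : g * f * (g ^ k * f) = g ^ (k+1) * f := by
        rw [mul_assoc, swap f (g ^ k) f (cfgk k), hff, ← mul_assoc, ← pow_succ']
      rw [t1, t2, t3, t4, add_zero, zero_add]
  have hA2n : A ^ (2 * n) = 1 := by
    rw [hApow, hgi2n, hg2n, one_mul, one_mul, hef1]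
  have hA2n1 : A ^ (2 * n - 1) = g * e + gi * f := by
    rw [hApow, hgi2n1, hg2n1]
  have hAn : A ^ n = g ^ n := by
    rw [hApow, hginn, ← mul_add, hef1, mul_one]
  have hsgi : s * gi = g * s := by
    have h1 : g * (s * g) * gi = g * (gi * s) * gi := by rw [hsg]
    have h2 : g * (s * g) * gi = g * s := by
      rw [mul_assoc, mul_assoc, hgi, mul_one]
    have h3 : g * (gi * s) * gi = s * gi := by
      rw [← mul_assoc, hgi, one_mul]
    rw [← h3, ← h1, h2]
  have hsgk : ∀ k : ℕ, s * g ^ k = gi ^ k * s := by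
    intro k; induction k with
    | zero => simp
    | succ k ih =>
      rw [pow_succ' g, pow_succ' gi, ← mul_assoc, hsg, mul_assoc, ih, ← mul_assoc]
  have hsgn : s * g ^ n = g ^ n * s := by rw [hsgk n, hginn]
  have hse : s * e = e * s := by
    rw [he, mul_smul_comm, smul_mul_assoc]
    congr 1
    rw [mul_add, add_mul, mul_one, one_mul, hsgn]
  have hsf : s * f = f * s := by
    rw [hf, mul_smul_comm, smul_mul_assoc]
    congr 1
    rw [mul_sub, sub_mul, mul_one, one_mul, hsgn]
  have hsA : s * A = A ^ (2 * n - 1) * s := by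
    rw [hA2n1, hA', mul_add, add_mul]
    have t1 : s * (gi * e) = g * e * s := by
      rw [← mul_assoc, hsgi, mul_assoc, hse, ← mul_assoc]
    have t2 : s * (g * f) = gi * f * s := by
      rw [← mul_assoc, hsg, mul_assoc, hsf, ← mul_assoc]
    rw [t1, t2]
  have hAs : A * s = s * A ^ (2 * n - 1) := by
    have h0 : A = s * (A ^ (2 * n - 1) * s) := by
      rw [← hsA, ← mul_assoc, hss, one_mul]
    calc A * s = (s * (A ^ (2 * n - 1) * s)) * s := by rw [← h0]
      _ = s * A ^ (2 * n - 1) := by rw [mul_assoc, mul_assoc, hss, mul_one]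
  have cAgn : A * g ^ n = g ^ n * A := by
    rw [hA', add_mul, mul_add]
    have t1 : gi * e * g ^ n = g ^ n * (gi * e) := by
      rw [mul_assoc, cegk n, ← mul_assoc, ← cgngi, mul_assoc]
    have t2 : g * f * g ^ n = g ^ n * (g * f) := by
      rw [mul_assoc, cfgk n, ← mul_assoc, ← cgng, mul_assoc]
    rw [t1, t2]
  have c2 : B * B = 1 := by
    rw [hB, mul_assoc, ← mul_assoc s, hsgn, mul_assoc, hss, mul_one, hgnn]
  have c4 : A * B = B * A ^ (2 * n - 1) := by
    rw [hB, ← mul_assoc, cAgn, mul_assoc, hAs, ← mul_assoc]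
  have c3 : A * B * A = B := by
    rw [hB, ← mul_assoc A, cAgn, mul_assoc (g ^ n), hAs, ← mul_assoc, mul_assoc (g ^ n * s),
      ← pow_succ, show 2 * n - 1 + 1 = 2 * n by omega, hA2n, mul_one]
  have c6 : B * A ^ n = s := by
    rw [hB, hAn, mul_assoc, hsgn, ← mul_assoc, hgnn, one_mul]
  have c7 : A - (1 / 2 : ℂ) • ((A - A ^ (2 * n - 1)) * (1 + A ^ n)) = g := by
    rw [hAn]
    have h1 : (1/2:ℂ) • ((A - A ^ (2 * n - 1)) * (1 + g ^ n)) = (A - A ^ (2 * n - 1)) * e := by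
      rw [he, mul_smul_comm]
    rw [h1, hA2n1, hA']
    have expand : (gi * e + g * f - (g * e + gi * f)) * e = gi * e - g * e := by
      rw [sub_mul, add_mul, add_mul, mul_assoc gi e, hee, mul_assoc g f, hfe0, mul_zero,
        add_zero, mul_assoc g e, hee, mul_assoc gi f, hfe0, mul_zero, add_zero]
    rw [expand]
    have final : gi * e + g * f - (gi * e - g * e) = g * (e + f) := by noncomm_ring
    rw [final, hef1, mul_one]
  exact ⟨hA2n, c2, c3, c4, hAn, c6, c7⟩

theorem stmt1 (n : ℕ) (hn : 1 ≤ n)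
    (A B : MonoidAlgebra ℂ (DihedralGroup (2 * n)))
    (hA : A = of ℂ (DihedralGroup (2 * n)) (r 1)
        - (1 / 2 : ℂ) •
          ((of ℂ (DihedralGroup (2 * n)) (r 1)
              - of ℂ (DihedralGroup (2 * n)) ((r 1 : DihedralGroup (2 * n))⁻¹))
            * (1 + of ℂ (DihedralGroup (2 * n)) ((r 1 : DihedralGroup (2 * n)) ^ n))))
    (hB : B = of ℂ (DihedralGroup (2 * n)) ((r 1 : DihedralGroup (2 * n)) ^ n * sr 0)) :
    A ^ (2 * n) = 1 ∧ B ^ 2 = 1 ∧ A * B * A = B ∧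
      ∃ Θ : MonoidAlgebra ℂ (DihedralGroup (2 * n)) →ₐ[ℂ] MonoidAlgebra ℂ (DihedralGroup (2 * n)),
        Θ (of ℂ (DihedralGroup (2 * n)) (r 1)) = A ∧
        Θ (of ℂ (DihedralGroup (2 * n)) (sr 0)) = B ∧
        Θ (Θ (of ℂ (DihedralGroup (2 * n)) (r 1))) = of ℂ (DihedralGroup (2 * n)) (r 1) ∧
        Θ (Θ (of ℂ (DihedralGroup (2 * n)) (sr 0))) = of ℂ (DihedralGroup (2 * n)) (sr 0) ∧
        Function.Bijective Θ := by
  haveI : NeZero (2 * n) := ⟨by omega⟩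
  haveI : Fact (1 < 2 * n) := ⟨by omega⟩
  let G : (DihedralGroup (2 * n)) →* MonoidAlgebra ℂ (DihedralGroup (2 * n)) := of ℂ (DihedralGroup (2 * n))
  have hgi : G (r 1) * G ((r 1 : (DihedralGroup (2 * n)))⁻¹) = 1 := by
    rw [← map_mul, mul_inv_cancel, map_one]
  have hig : G ((r 1 : (DihedralGroup (2 * n)))⁻¹) * G (r 1) = 1 := by
    rw [← map_mul, inv_mul_cancel, map_one]
  have hr2n : (r 1 : (DihedralGroup (2 * n))) ^ (2 * n) = 1 := by
    rw [r_one_pow, ZMod.natCast_self, ← one_def]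
  have hg2n : (G (r 1)) ^ (2 * n) = 1 := by rw [← map_pow, hr2n, map_one]
  have hss : G (sr 0) * G (sr 0) = 1 := by
    rw [← map_mul, sr_mul_sr, sub_self, ← one_def, map_one]
  have hsgrp : (sr 0 : (DihedralGroup (2 * n))) * r 1 = (r 1 : (DihedralGroup (2 * n)))⁻¹ * sr 0 := by
    show (sr 0 : (DihedralGroup (2 * n))) * r 1 = r (-1) * sr 0
    rw [sr_mul_r, r_mul_sr, zero_add, zero_sub, neg_neg]
  have hsg : G (sr 0) * G (r 1) = G ((r 1 : (DihedralGroup (2 * n)))⁻¹) * G (sr 0) := by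
    rw [← map_mul, ← map_mul, hsgrp]
  have hA' : A = G (r 1) - (1 / 2 : ℂ) • ((G (r 1) - G ((r 1 : (DihedralGroup (2 * n)))⁻¹)) * (1 + (G (r 1)) ^ n)) := by
    rw [hA, ← map_pow]
  have hB' : B = (G (r 1)) ^ n * G (sr 0) := by rw [hB, map_mul, map_pow]
  obtain ⟨c1, c2, c3, c4, c5, c6, c7⟩ :=
    dihedral_aux n hn (G (r 1)) (G ((r 1 : (DihedralGroup (2 * n)))⁻¹)) (G (sr 0)) hgi hig hg2n hss hsg A B hA' hB'
  refine ⟨c1, by rw [pow_two]; exact c2, c3, ?_⟩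
  -- congruence of powers of A
  have hpow : ∀ a b : ℕ, ((a : ZMod (2 * n)) = (b : ZMod (2 * n))) → A ^ a = A ^ b := by
    intro a b hab
    have h1 : a % (2 * n) = b % (2 * n) := (ZMod.natCast_eq_natCast_iff a b (2 * n)).1 hab
    rw [pow_eq_pow_mod a c1, pow_eq_pow_mod b c1, h1]
  have hm1 : ((2 * n - 1 : ℕ) : ZMod (2 * n)) = -1 := by
    have h : ((2 * n - 1 : ℕ) : ZMod (2 * n)) + ((1 : ℕ) : ZMod (2 * n)) = 0 := by
      rw [← Nat.cast_add, show 2 * n - 1 + 1 = 2 * n by omega, ZMod.natCast_self]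
    exact eq_neg_of_add_eq_zero_left (by simpa using h)
  have hABk : ∀ k : ℕ, A ^ k * B = B * A ^ (k * (2 * n - 1)) := by
    intro k; induction k with
    | zero => simp
    | succ k ih =>
      rw [pow_succ, mul_assoc, c4, ← mul_assoc, ih, mul_assoc, ← pow_add]
      congr 2
      ring
  have hcast : ∀ i j : ZMod (2 * n),
      (((j - i).val : ℕ) : ZMod (2 * n)) = ((i.val * (2 * n - 1) + j.val : ℕ) : ZMod (2 * n)) := by
    intro i j
    simp only [Nat.cast_add, Nat.cast_mul, ZMod.natCast_val, ZMod.cast_id, hm1]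
    ring
  let φfun : (DihedralGroup (2 * n)) → MonoidAlgebra ℂ (DihedralGroup (2 * n)) := fun d =>
    match d with
    | DihedralGroup.r i => A ^ i.val
    | DihedralGroup.sr i => B * A ^ i.val
  have φ_r : ∀ i : ZMod (2 * n), φfun (r i) = A ^ i.val := fun _ => rfl
  have φ_sr : ∀ i : ZMod (2 * n), φfun (sr i) = B * A ^ i.val := fun _ => rfl
  have hone : φfun 1 = 1 := by
    rw [show (1 : (DihedralGroup (2 * n))) = r 0 from one_def, φ_r, ZMod.val_zero, pow_zero]
  have hmul : ∀ x y : (DihedralGroup (2 * n)), φfun (x * y) = φfun x * φfun y := by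
    intro x y
    cases x with
    | r i =>
      cases y with
      | r j =>
        rw [r_mul_r, φ_r, φ_r, φ_r, ← pow_add]
        refine hpow _ _ ?_
        simp [ZMod.natCast_val, ZMod.cast_id]
      | sr j =>
        rw [r_mul_sr, φ_sr, φ_r, φ_sr, ← mul_assoc, hABk, mul_assoc, ← pow_add]
        exact congrArg (B * ·) (hpow _ _ (hcast i j))
    | sr i =>
      cases y with
      | r j =>
        rw [sr_mul_r, φ_sr, φ_sr, φ_r, mul_assoc, ← pow_add]
        refine congrArg (B * ·) (hpow _ _ ?_)
        simp [ZMod.natCast_val, ZMod.cast_id]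
      | sr j =>
        rw [sr_mul_sr, φ_r, φ_sr, φ_sr, mul_assoc, ← mul_assoc (A ^ i.val), hABk,
          ← mul_assoc, ← mul_assoc, c2, one_mul, ← pow_add]
        exact hpow _ _ (hcast i j)
  let φ : (DihedralGroup (2 * n)) →* MonoidAlgebra ℂ (DihedralGroup (2 * n)) :=
    { toFun := φfun, map_one' := hone, map_mul' := hmul }
  let Θ : MonoidAlgebra ℂ (DihedralGroup (2 * n)) →ₐ[ℂ] MonoidAlgebra ℂ (DihedralGroup (2 * n)) :=
    MonoidAlgebra.lift ℂ (MonoidAlgebra ℂ (DihedralGroup (2 * n))) (DihedralGroup (2 * n)) φ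
  have hΘof : ∀ d : (DihedralGroup (2 * n)), Θ (of ℂ (DihedralGroup (2 * n)) d) = φfun d := fun d => MonoidAlgebra.lift_of (R := ℂ) φ d
  have hΘr1 : Θ (of ℂ (DihedralGroup (2 * n)) (r 1)) = A := by
    rw [hΘof, φ_r, ZMod.val_one, pow_one]
  have hΘsr0 : Θ (of ℂ (DihedralGroup (2 * n)) (sr 0)) = B := by
    rw [hΘof, φ_sr, ZMod.val_zero, pow_zero, mul_one]
  have hΘrinv : Θ (of ℂ (DihedralGroup (2 * n)) ((r 1 : (DihedralGroup (2 * n)))⁻¹)) = A ^ (2 * n - 1) := by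
    rw [show ((r 1 : (DihedralGroup (2 * n)))⁻¹) = r (-1) from rfl, hΘof, φ_r]
    refine hpow _ _ ?_
    simp [ZMod.natCast_val, ZMod.cast_id, hm1]
  have hΘrn : Θ (of ℂ (DihedralGroup (2 * n)) ((r 1 : (DihedralGroup (2 * n))) ^ n)) = A ^ n := by
    rw [map_pow, map_pow, hΘr1]
  have hΘA : Θ A = of ℂ (DihedralGroup (2 * n)) (r 1) := by
    rw [hA, map_sub, map_smul, map_mul, map_sub, map_add, map_one, hΘr1, hΘrinv, hΘrn]
    exact c7
  have hΘB : Θ B = of ℂ (DihedralGroup (2 * n)) (sr 0) := by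
    have hgrp : (r 1 : (DihedralGroup (2 * n))) ^ n * sr 0 = sr (-(n : ZMod (2 * n))) := by
      rw [r_one_pow, r_mul_sr, zero_sub]
    rw [hB, hgrp, hΘof, φ_sr]
    have hval : A ^ ((-(n : ZMod (2 * n))).val) = A ^ n := by
      refine hpow _ _ ?_
      rw [ZMod.natCast_val, ZMod.cast_id]
      have : ((n : ZMod (2 * n))) + ((n : ZMod (2 * n))) = 0 := by
        rw [← Nat.cast_add, show n + n = 2 * n by omega, ZMod.natCast_self]
      linear_combination -this
    rw [hval, c6]
  have hΘΘ : ∀ x, Θ (Θ x) = x := by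
    have hcomp : Θ.comp Θ = AlgHom.id ℂ (MonoidAlgebra ℂ (DihedralGroup (2 * n))) := by
      apply MonoidAlgebra.algHom_ext ?_ (Subsingleton.elim _ _)
      intro d
      show Θ (Θ (of ℂ (DihedralGroup (2 * n)) d)) = of ℂ (DihedralGroup (2 * n)) d
      rw [hΘof]
      cases d with
      | r i =>
        rw [φ_r, map_pow, hΘA, ← map_pow, r_one_pow]
        congr 2
        simp [ZMod.natCast_val, ZMod.cast_id]
      | sr i =>
        rw [φ_sr, map_mul, map_pow, hΘA, hΘB, ← map_pow, r_one_pow, ← map_mul, sr_mul_r,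
          zero_add]
        congr 2
        simp [ZMod.natCast_val, ZMod.cast_id]
    intro x
    exact AlgHom.congr_fun hcomp x
  exact ⟨Θ, hΘr1, hΘsr0, by rw [hΘr1, hΘA], by rw [hΘsr0, hΘB],
    Function.Involutive.bijective hΘΘ⟩
end

section
/- Let m ≥ 1, n = 2m, and let Q be the generalized quaternion group of order 4n with presentation ⟨a, b | a^{2n} = 1, b² = a^n, bab⁻¹ = a^{-1}⟩. In ℂ[Q], define f_k = a^k + (1/4)(a^k − a^{-k})(a^n − 1)(1 − b a^m) for each integer k. Then f_0 = 1 and f_k · f_1 = f_{k+1} for all k ∈ ℤ; in particular f_1^{2n} = 1 and f_{-1} = f_1^{-1}. -/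
open MonoidAlgebra QuaternionGroup

private lemma quatKey {R : Type*} [Ring R] [Module ℂ R] [SMulCommClass ℂ R R]
    [IsScalarTower ℂ R R] (x xi A Ai z B : R)
    (hzA : ∀ t, A * (z * t) = z * (A * t)) (hzA' : A * z = z * A)
    (hzAi : ∀ t, Ai * (z * t) = z * (Ai * t)) (hzAi' : Ai * z = z * Ai)
    (hzB : ∀ t, B * (z * t) = z * (B * t)) (hzB' : B * z = z * B)
    (hzz : ∀ t : R, z * (z * t) = t) (hzz' : z * z = 1)
    (hBA : ∀ t, B * (A * t) = Ai * (B * t)) (hBA' : B * A = Ai * B)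
    (hBAi : ∀ t, B * (Ai * t) = A * (B * t)) (hBAi' : B * Ai = A * B)
    (hBB : ∀ t, B * (B * t) = z * t) (hBB' : B * B = z) :
    (x + (1/4:ℂ) • ((x - xi) * (z - 1) * (1 - B))) *
      (A + (1/4:ℂ) • ((A - Ai) * (z - 1) * (1 - B)))
    = x * A + (1/4:ℂ) • ((x * A - xi * Ai) * (z - 1) * (1 - B)) := by
  simp only [mul_sub, sub_mul, mul_add, add_mul, mul_one, one_mul, smul_mul_assoc,
    mul_smul_comm, smul_smul, smul_sub, smul_add, mul_assoc]
  simp only [hzA, hzA', hzAi, hzAi', hzB, hzB', hzz, hzz', hBA, hBA', hBAi, hBAi', hBB, hBB',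
    mul_one, one_mul, mul_assoc]
  match_scalars <;> norm_num

private lemma a_one_zpow' (n : ℕ) (k : ℤ) :
    (a 1 : QuaternionGroup n) ^ k = a (k : ZMod (2 * n)) := by
  induction k using Int.induction_on with
  | zero => simp
  | succ i ih => rw [zpow_add_one, ih, a_mul_a]; push_cast; norm_num
  | pred i ih =>
      rw [zpow_sub_one, ih]
      have : (a 1 : QuaternionGroup n)⁻¹ = a (-1) := rfl
      rw [this, a_mul_a]; push_cast; ring_nf

/-- The explicit formula for `f k`. -/
private noncomputable def F (m : ℕ) (k : ℤ) : MonoidAlgebra ℂ (QuaternionGroup (2 * m)) :=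
  of ℂ (QuaternionGroup (2 * m)) ((a 1 : QuaternionGroup (2 * m)) ^ k)
    + (1 / 4 : ℂ) •
      ((of ℂ (QuaternionGroup (2 * m)) ((a 1 : QuaternionGroup (2 * m)) ^ k)
          - of ℂ (QuaternionGroup (2 * m)) ((a 1 : QuaternionGroup (2 * m)) ^ (-k)))
        * (of ℂ (QuaternionGroup (2 * m)) ((a 1 : QuaternionGroup (2 * m)) ^ (2 * m)) - 1)
        * (1 - of ℂ (QuaternionGroup (2 * m))
            (xa 0 * (a 1 : QuaternionGroup (2 * m)) ^ m)))

private lemma ofMulOf {G : Type*} [Group G] {p q r : G} (h : p * q = r) :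
    (of ℂ G p) * (of ℂ G q) = of ℂ G r := by rw [← map_mul, h]

private lemma ofMulOf' {G : Type*} [Group G] {p q r : G} (h : p * q = r)
    (t : MonoidAlgebra ℂ G) :
    (of ℂ G p) * ((of ℂ G q) * t) = of ℂ G r * t := by rw [← mul_assoc, ofMulOf h]

private lemma ofComm {G : Type*} [Group G] {p q r s : G} (h : p * q = r * s)
    (t : MonoidAlgebra ℂ G) :
    (of ℂ G p) * ((of ℂ G q) * t) = of ℂ G r * (of ℂ G s * t) := by
  rw [← mul_assoc, ← mul_assoc, ← map_mul, ← map_mul, h]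

private lemma Fmul (m : ℕ) (k : ℤ) : F m k * F m 1 = F m (k + 1) := by
  classical
  set G := QuaternionGroup (2 * m) with hGdef
  have hZ : ((2 * (2 * m) : ℕ) : ZMod (2 * (2 * m))) = 0 := ZMod.natCast_self _
  -- group-level identities
  have hG1 : ((a 1 : G) ^ (1:ℤ)) * ((a 1 : G) ^ (2 * m)) =
      ((a 1 : G) ^ (2 * m)) * ((a 1 : G) ^ (1:ℤ)) := by
    rw [a_one_zpow', a_one_pow, a_mul_a, a_mul_a, add_comm]
  have hG2 : ((a 1 : G) ^ (-1:ℤ)) * ((a 1 : G) ^ (2 * m)) =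
      ((a 1 : G) ^ (2 * m)) * ((a 1 : G) ^ (-1:ℤ)) := by
    rw [a_one_zpow', a_one_pow, a_mul_a, a_mul_a, add_comm]
  have hB : (xa 0 * (a 1 : G) ^ m) = xa ((m : ZMod (2 * (2 * m)))) := by
    rw [a_one_pow, xa_mul_a, zero_add]
  have hG3 : (xa 0 * (a 1 : G) ^ m) * ((a 1 : G) ^ (2 * m)) =
      ((a 1 : G) ^ (2 * m)) * (xa 0 * (a 1 : G) ^ m) := by
    rw [hB, a_one_pow, xa_mul_a, a_mul_xa]
    congr 1
    push_cast at hZ ⊢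
    linear_combination hZ
  have hG4 : ((a 1 : G) ^ (2 * m)) * ((a 1 : G) ^ (2 * m)) = 1 := by
    rw [a_one_pow, a_mul_a, one_def]
    congr 1
    push_cast at hZ ⊢
    linear_combination hZ
  have hG5 : (xa 0 * (a 1 : G) ^ m) * ((a 1 : G) ^ (1:ℤ)) =
      ((a 1 : G) ^ (-1:ℤ)) * (xa 0 * (a 1 : G) ^ m) := by
    rw [hB, a_one_zpow', a_one_zpow', xa_mul_a, a_mul_xa]
    congr 1
    push_cast
    ring
  have hG6 : (xa 0 * (a 1 : G) ^ m) * ((a 1 : G) ^ (-1:ℤ)) =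
      ((a 1 : G) ^ (1:ℤ)) * (xa 0 * (a 1 : G) ^ m) := by
    rw [hB, a_one_zpow', a_one_zpow', xa_mul_a, a_mul_xa]
    congr 1
    push_cast
    ring
  have hG7 : (xa 0 * (a 1 : G) ^ m) * (xa 0 * (a 1 : G) ^ m) = ((a 1 : G) ^ (2 * m)) := by
    rw [hB, a_one_pow, xa_mul_xa]
    congr 1
    push_cast
    ring
  have e1 : of ℂ G ((a 1 : G) ^ k) * of ℂ G ((a 1 : G) ^ (1:ℤ)) =
      of ℂ G ((a 1 : G) ^ (k + 1)) := by
    rw [← map_mul, ← zpow_add]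
  have e2 : of ℂ G ((a 1 : G) ^ (-k)) * of ℂ G ((a 1 : G) ^ (-1:ℤ)) =
      of ℂ G ((a 1 : G) ^ (-(k + 1))) := by
    rw [← map_mul, ← zpow_add, show -k + -1 = -(k + 1) by ring]
  show F m k * F m 1 = F m (k + 1)
  unfold F
  rw [← e1, ← e2]
  exact quatKey _ _ _ _ _ _
    (ofComm hG1) (ofMulOf hG1 ▸ (ofMulOf hG1.symm.symm ▸ by rw [← map_mul, hG1, map_mul]))
    (ofComm hG2) (by rw [← map_mul, hG2, map_mul])
    (ofComm hG3) (by rw [← map_mul, hG3, map_mul])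
    (fun t => by rw [ofMulOf' hG4, map_one, one_mul]) (by rw [ofMulOf hG4, map_one])
    (ofComm hG5) (by rw [← map_mul, hG5, map_mul])
    (ofComm hG6) (by rw [← map_mul, hG6, map_mul])
    (fun t => by rw [ofMulOf' hG7]) (ofMulOf hG7)

private lemma Fone (m : ℕ) (N : ℤ) (h : (a 1 : QuaternionGroup (2 * m)) ^ N = 1) :
    F m N = 1 := by
  have h' : (a 1 : QuaternionGroup (2 * m)) ^ (-N) = 1 := by
    rw [zpow_neg, h, inv_one]
  unfold F
  rw [h, h', map_one]
  simp

theorem stmt2 (m : ℕ) (hm : 1 ≤ m)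
    (f : ℤ → MonoidAlgebra ℂ (QuaternionGroup (2 * m)))
    (hf : ∀ k : ℤ, f k =
      of ℂ (QuaternionGroup (2 * m)) ((a 1 : QuaternionGroup (2 * m)) ^ k)
        + (1 / 4 : ℂ) •
          ((of ℂ (QuaternionGroup (2 * m)) ((a 1 : QuaternionGroup (2 * m)) ^ k)
              - of ℂ (QuaternionGroup (2 * m)) ((a 1 : QuaternionGroup (2 * m)) ^ (-k)))
            * (of ℂ (QuaternionGroup (2 * m)) ((a 1 : QuaternionGroup (2 * m)) ^ (2 * m)) - 1)
            * (1 - of ℂ (QuaternionGroup (2 * m))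
                (xa 0 * (a 1 : QuaternionGroup (2 * m)) ^ m)))) :
    f 0 = 1 ∧ (∀ k : ℤ, f k * f 1 = f (k + 1)) ∧ f 1 ^ (2 * (2 * m)) = 1 ∧
      f (-1) * f 1 = 1 ∧ f 1 * f (-1) = 1 := by
  have hfF : ∀ k : ℤ, f k = F m k := fun k => hf k
  have h0 : f 0 = 1 := by
    rw [hfF]
    exact Fone m 0 (zpow_zero _)
  have h2 : ∀ k : ℤ, f k * f 1 = f (k + 1) := by
    intro k
    rw [hfF, hfF, hfF]
    exact Fmul m k
  have hpow : ∀ j : ℕ, f 1 ^ j = f 0 * f (j : ℤ) := by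
    intro j
    induction j with
    | zero => simp [h0]
    | succ i ih =>
        rw [pow_succ, ih, mul_assoc, h2]
        push_cast
        ring_nf
  have hNpos : 1 ≤ 2 * (2 * m) := by omega
  have hzN : (a 1 : QuaternionGroup (2 * m)) ^ ((2 * (2 * m) : ℕ) : ℤ) = 1 := by
    rw [a_one_zpow']
    rw [show (((2 * (2 * m) : ℕ) : ℤ) : ZMod (2 * (2 * m))) = 0 by
      push_cast; exact_mod_cast ZMod.natCast_self (2 * (2 * m))]
    exact one_def.symm
  have hfN : f ((2 * (2 * m) : ℕ) : ℤ) = 1 := by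
    rw [hfF]
    exact Fone m _ hzN
  have h3 : f 1 ^ (2 * (2 * m)) = 1 := by
    rw [hpow (2 * (2 * m)), h0, one_mul, hfN]
  have h4 : f (-1) * f 1 = 1 := by
    rw [h2 (-1)]
    norm_num [h0]
  have h5 : f 1 * f (-1) = 1 := by
    have hR : f 1 * f 1 ^ (2 * (2 * m) - 1) = 1 := by
      rw [← pow_succ']
      rw [show 2 * (2 * m) - 1 + 1 = 2 * (2 * m) by omega]
      exact h3
    have : f (-1) = f 1 ^ (2 * (2 * m) - 1) := by
      calc f (-1) = f (-1) * (f 1 * f 1 ^ (2 * (2 * m) - 1)) := by rw [hR, mul_one]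
        _ = (f (-1) * f 1) * f 1 ^ (2 * (2 * m) - 1) := by rw [mul_assoc]
        _ = f 1 ^ (2 * (2 * m) - 1) := by rw [h4, one_mul]
    rw [this, hR]
  exact ⟨h0, h2, h3, h4, h5⟩
end
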